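/- The Type (B.1) metric with q = c = 0 is Ricci flat and its only non-zero Weyl curvature component (up to symmetries) is W₁₂₁₂ = −3b. In particular it is flat if and only if b = 0, and for b ≠ 0 all Jacobi operators J(x) = R(·,x)x are two-step nilpotent (so the metric is Osserman with all eigenvalues of every Jacobi operator equal to zero). -/

import Mathlib

open Real Matrix

noncomputable section

abbrev Pt : Type := Fin 4 → ℝ
abbrev Mtx : Type := Matrix (Fin 4) (Fin 4) ℝ

/-- Partial derivative in the `i`-th coordinate direction. -/
def pd (i : Fin 4) (f : Pt → ℝ) (x : Pt) : ℝ :=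
  fderiv ℝ f x (Pi.single i 1)

/-- Inverse of the metric matrix. -/
def ginv (g : Pt → Mtx) (x : Pt) : Mtx := (g x)⁻¹

/-- Christoffel symbols Γ^k_{ij} of the Levi-Civita connection. -/
def chris (g : Pt → Mtx) (x : Pt) (k i j : Fin 4) : ℝ :=
  (1/2) * ∑ l, ginv g x k l *
    (pd i (fun y => g y l j) x + pd j (fun y => g y l i) x - pd l (fun y => g y i j) x)

/-- Component `l` of the curvature operator R(∂_i,∂_j)∂_k (convention
R(X,Y) = ∇_{[X,Y]} - [∇_X,∇_Y]). -/
def Rup (g : Pt → Mtx) (x : Pt) (l i j k : Fin 4) : ℝ :=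
  pd j (fun y => chris g y l i k) x - pd i (fun y => chris g y l j k) x
    + ∑ m, chris g x m i k * chris g x l j m
    - ∑ m, chris g x m j k * chris g x l i m

/-- The (0,4) curvature tensor R(∂_i,∂_j,∂_k,∂_l) = g(R(∂_i,∂_j)∂_k, ∂_l). -/
def Riem (g : Pt → Mtx) (x : Pt) (i j k l : Fin 4) : ℝ :=
  ∑ m, g x l m * Rup g x m i j k

/-- Ricci tensor ρ(X,Y) = trace (Z ↦ R(X,Z)Y). -/
def ricci (g : Pt → Mtx) (x : Pt) (i j : Fin 4) : ℝ :=
  ∑ k, Rup g x k i k j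

/-- Scalar curvature. -/
def scal (g : Pt → Mtx) (x : Pt) : ℝ :=
  ∑ i, ∑ j, ginv g x i j * ricci g x i j

/-- The Ricci operator g^{-1}ρ. -/
def RicOp (g : Pt → Mtx) (x : Pt) : Mtx :=
  Matrix.of fun i j => ∑ k, ginv g x i k * ricci g x k j

/-- Schouten tensor 𝔖 = ρ - (τ/6) g (dimension 4). -/
def schouten (g : Pt → Mtx) (x : Pt) (i j : Fin 4) : ℝ :=
  ricci g x i j - scal g x / 6 * g x i j

/-- Covariant derivative of the Schouten tensor, (∇_i 𝔖)_{jk}. -/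
def covSchouten (g : Pt → Mtx) (x : Pt) (i j k : Fin 4) : ℝ :=
  pd i (fun y => schouten g y j k) x
    - ∑ m, chris g x m i j * schouten g x m k
    - ∑ m, chris g x m i k * schouten g x j m

/-- Cotton tensor 𝔠_{ijk} = (∇_i 𝔖)_{jk} - (∇_j 𝔖)_{ik}. -/
def cotton (g : Pt → Mtx) (x : Pt) (i j k : Fin 4) : ℝ :=
  covSchouten g x i j k - covSchouten g x j i k

/-- Weyl conformal curvature tensor (dimension 4). -/
def weyl (g : Pt → Mtx) (x : Pt) (i j k l : Fin 4) : ℝ :=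
  Riem g x i j k l
    - (1/2) * (g x i k * ricci g x j l - g x i l * ricci g x j k
        + g x j l * ricci g x i k - g x j k * ricci g x i l)
    + scal g x / 6 * (g x i k * g x j l - g x i l * g x j k)

/-- Covariant derivative of the Cotton tensor, (∇_α 𝔠)_{kij}. -/
def covCotton (g : Pt → Mtx) (x : Pt) (α k i j : Fin 4) : ℝ :=
  pd α (fun y => cotton g y k i j) x
    - ∑ m, chris g x m α k * cotton g x m i j
    - ∑ m, chris g x m α i * cotton g x k m j
    - ∑ m, chris g x m α j * cotton g x k i m

/-- Bach tensor B_{ij} = (1/2){ g^{kα}(∇_α 𝔠)_{kij} + ρ^{kℓ} W_{ikjℓ} }. -/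
def bach (g : Pt → Mtx) (x : Pt) (i j : Fin 4) : ℝ :=
  (1/2) * ((∑ k, ∑ α, ginv g x k α * covCotton g x α k i j)
    + ∑ k, ∑ l, (∑ p, ∑ r, ginv g x k p * ginv g x l r * ricci g x p r) * weyl g x i k j l)

/-- Hessian of a function with respect to the Levi-Civita connection. -/
def hess (g : Pt → Mtx) (φ : Pt → ℝ) (x : Pt) (i j : Fin 4) : ℝ :=
  pd i (fun y => pd j φ y) x - ∑ m, chris g x m i j * pd m φ x

/-- Laplacian (metric trace of the Hessian). -/
def lap (g : Pt → Mtx) (φ : Pt → ℝ) (x : Pt) : ℝ :=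
  ∑ i, ∑ j, ginv g x i j * hess g φ x i j

/-- The conformal metric ḡ = φ^{-2} g. -/
def conf (φ : Pt → ℝ) (g : Pt → Mtx) : Pt → Mtx :=
  fun y => ((φ y)^2)⁻¹ • g y

/-- Einstein at a point: ρ = (τ/4) g. -/
def IsEinsteinAt (g : Pt → Mtx) (x : Pt) : Prop :=
  ∀ i j, ricci g x i j = scal g x / 4 * g x i j

/-- The conformally Einstein equation 2 Hes_φ + φ ρ = (1/4)(2Δφ + φτ) g. -/
def ConfEinsteinEq (g : Pt → Mtx) (φ : Pt → ℝ) : Prop :=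
  ∀ (x : Pt) (i j : Fin 4),
    2 * hess g φ x i j + φ x * ricci g x i j
      = (1/4) * (2 * lap g φ x + φ x * scal g x) * g x i j

/-- Jacobi operator J(v) = R(·,v)v as a matrix. -/
def jacobi (g : Pt → Mtx) (x : Pt) (v : Fin 4 → ℝ) : Mtx :=
  Matrix.of fun l i => ∑ j, ∑ k, v j * v k * Rup g x l i j k

/-- Type (A.1) metric. Coordinates: `x 0 = x₁, …, x 3 = x₄`. -/
def gA1 (a b c q : ℝ) : Pt → Mtx := fun x =>
  !![4*b*(x 1)^2 + a, 2*b*(x 1), -(4*a*(x 1)*(x 3) - 4*c*(x 1) + a)/2, 2*a*(x 1);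
     2*b*(x 1), b, -(a*(x 3) - c), a;
     -(4*a*(x 1)*(x 3) - 4*c*(x 1) + a)/2, -(a*(x 3) - c), q, 0;
     2*a*(x 1), a, 0, 0]

/-- Type (A.2) metric. -/
def gA2 (a b c q α : ℝ) : Pt → Mtx := fun x =>
  !![0, 0, -a * Real.exp (2*α*(x 3)), 0;
     0, a * Real.exp (2*α*(x 3)), 0, 0;
     -a * Real.exp (2*α*(x 3)), 0, b * Real.exp (2*(α-1)*(x 3)), c * Real.exp ((α-1)*(x 3));
     0, 0, c * Real.exp ((α-1)*(x 3)), q]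

/-- Type (A.3) metric `g₊`. -/
def gA3p (a b c q : ℝ) : Pt → Mtx := fun x =>
  !![0, 0, 0, a * Real.exp (2*(x 2));
     0, a * Real.exp (2*(x 2)) * Real.cos (x 3)^2, 0, 0;
     0, 0, b, c;
     a * Real.exp (2*(x 2)), 0, c, q]

/-- Type (A.3) metric `g₋`. -/
def gA3m (a b c q : ℝ) : Pt → Mtx := fun x =>
  !![0, 0, 0, a * Real.exp (2*(x 2));
     0, a * Real.exp (2*(x 2)) * Real.cosh (x 3)^2, 0, 0;
     0, 0, b, c;
     a * Real.exp (2*(x 2)), 0, c, q]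

/-- Type (A.4) metric. -/
def gA4 (a b : ℝ) : Pt → Mtx := fun x =>
  !![a/2*(x 3)^2 + 4*b*(x 1)^2 + a, 2*b*(x 1), a*(x 1)*(4 + (x 3)^2)/2, a*(1 + 2*(x 1)*(x 2))*(x 3)/2;
     2*b*(x 1), b, a*(4 + (x 3)^2)/4, a*(x 2)*(x 3)/2;
     a*(x 1)*(4 + (x 3)^2)/2, a*(4 + (x 3)^2)/4, 0, 0;
     a*(1 + 2*(x 1)*(x 2))*(x 3)/2, a*(x 2)*(x 3)/2, 0, a/2]

/-- Type (A.5) metric. -/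
def gA5 (a : ℝ) : Pt → Mtx := fun x =>
  !![0, -a*(x 3)/(8*(x 1)), 0, a/8;
     -a*(x 3)/(8*(x 1)), a*(2 + 2*(x 0)*(x 3) + (x 2)^2)/(8*(x 1)^2), -a*(x 2)/(8*(x 1)), -a*(x 0)/(8*(x 1));
     0, -a*(x 2)/(8*(x 1)), a/8, 0;
     a/8, -a*(x 0)/(8*(x 1)), 0, 0]

/-- Type (B.1) metric. -/
def gB1 (a b c q : ℝ) : Pt → Mtx := fun x =>
  !![q*((x 2)^2 + 4*(x 1)*(x 2)*(x 3) + 4*(x 1)^2*(x 3)^2) + 4*c*(x 1)*(x 2) + 8*c*(x 1)^2*(x 3) + 2*a*(x 2) + 4*b*(x 1)^2,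
       q*((x 2)*(x 3) + 2*(x 1)*(x 3)^2) + 4*c*(x 1)*(x 3) + c*(x 2) + 2*b*(x 1),
       q*((x 2) + 2*(x 1)*(x 3)) + 2*c*(x 1) + a, 2*a*(x 1);
     q*((x 2)*(x 3) + 2*(x 1)*(x 3)^2) + 4*c*(x 1)*(x 3) + c*(x 2) + 2*b*(x 1),
       q*(x 3)^2 + 2*c*(x 3) + b, q*(x 3) + c, a;
     q*((x 2) + 2*(x 1)*(x 3)) + 2*c*(x 1) + a, q*(x 3) + c, q, 0;
     2*a*(x 1), a, 0, 0]

/-- Type (B.3) metric. -/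
def gB3 (a b : ℝ) : Pt → Mtx := fun x =>
  !![0, -a * Real.exp (-(x 1)) * (x 2), a * Real.exp (-(x 1)), 0;
     -a * Real.exp (-(x 1)) * (x 2), 2*(2*b*(x 2)^2 - a*(x 3)), -2*b*(x 2), a;
     a * Real.exp (-(x 1)), -2*b*(x 2), b, 0;
     0, a, 0, 0]


/- ======================= auxiliary lemmas ======================= -/

lemma pd_const' (c : ℝ) (i : Fin 4) (x : Pt) : pd i (fun _ => c) x = 0 := by simp [pd]

lemma hasF_coord (j : Fin 4) (x : Pt) : HasFDerivAt (fun y : Pt => y j)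
    (ContinuousLinearMap.proj j : Pt →L[ℝ] ℝ) x :=
  (ContinuousLinearMap.proj j : Pt →L[ℝ] ℝ).hasFDerivAt

lemma pd_cx1 (c : ℝ) (i : Fin 4) (x : Pt) :
    pd i (fun y => c * y 1) x = c * (Pi.single i 1 : Pt) 1 := by
  have h := ((hasF_coord 1 x).const_mul c)
  rw [pd, h.fderiv]; simp

lemma pd_neg_cx1 (c : ℝ) (i : Fin 4) (x : Pt) :
    pd i (fun y => -(c * y 1)) x = -(c * (Pi.single i 1 : Pt) 1) := by
  have h : HasFDerivAt (fun y : Pt => -(c * y 1)) _ x := ((hasF_coord 1 x).const_mul c).neg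
  rw [pd, h.fderiv]; simp

lemma pd_quad (c d : ℝ) (i : Fin 4) (x : Pt) :
    pd i (fun y => c * y 2 + d * (y 1)^2) x
      = c * (Pi.single i 1 : Pt) 2 + d * (2 * x 1 * (Pi.single i 1 : Pt) 1) := by
  have e : (fun y : Pt => c * y 2 + d * (y 1)^2) = (fun y => c * y 2 + d * (y 1 * y 1)) := by
    funext y; ring
  have h : HasFDerivAt (fun y : Pt => c * y 2 + d * (y 1 * y 1)) _ x := ((hasF_coord 2 x).const_mul c).add
    (((hasF_coord 1 x).mul (hasF_coord 1 x)).const_mul d)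
  rw [pd, e, h.fderiv]; simp; ring

/-- Explicit inverse of the (B.1), q = c = 0 metric. -/
def Gi (a b : ℝ) (x : Pt) : Mtx :=
  !![0, 0, 1/a, 0;
     0, 0, -2*(x 1)/a, 1/a;
     1/a, -2*(x 1)/a, -2*(x 2)/a, 0;
     0, 1/a, 0, -b/a^2]

lemma ginv_eq (a b : ℝ) (h : a ≠ 0) (x : Pt) : ginv (gB1 a b 0 0) x = Gi a b x := by
  rw [ginv, Matrix.inv_eq_right_inv]
  ext i j
  fin_cases i <;> fin_cases j <;>
    simp [gB1, Gi, Matrix.mul_apply, Fin.sum_univ_four, Matrix.one_apply] <;>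
    field_simp <;> ring

/-- Closed form of the Christoffel symbols. -/
def Γf (a b : ℝ) (y : Pt) (k i j : Fin 4) : ℝ :=
  if k = 0 then (if i = 0 ∧ j = 0 then -1 else 0)
  else if k = 1 then
    (if i = 0 ∧ j = 0 then 2 * y 1 else if (i = 0 ∧ j = 1) ∨ (i = 1 ∧ j = 0) then 1 else 0)
  else if k = 2 then
    (if i = 0 ∧ j = 0 then 2 * y 2 + 8*b/a * (y 1)^2
     else if (i = 0 ∧ j = 1) ∨ (i = 1 ∧ j = 0) then 4*b/a * y 1
     else if (i = 0 ∧ j = 2) ∨ (i = 2 ∧ j = 0) then 1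
     else if (i = 0 ∧ j = 3) ∨ (i = 3 ∧ j = 0) then 2 * y 1
     else if i = 1 ∧ j = 1 then 2*b/a
     else if (i = 1 ∧ j = 3) ∨ (i = 3 ∧ j = 1) then 1 else 0)
  else
    (if i = 0 ∧ j = 0 then -(4*b/a * y 1)
     else if (i = 0 ∧ j = 1) ∨ (i = 1 ∧ j = 0) then -(b/a)
     else if (i = 0 ∧ j = 3) ∨ (i = 3 ∧ j = 0) then -1 else 0)

set_option maxHeartbeats 4000000 in
lemma chris_eq (a b : ℝ) (h : a ≠ 0) (x : Pt) (k i j : Fin 4) :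
    chris (gB1 a b 0 0) x k i j = Γf a b x k i j := by
  fin_cases k <;> fin_cases i <;> fin_cases j <;>
  · simp only [chris, Fin.sum_univ_four, ginv_eq a b h, Gi, gB1, Matrix.of_apply, Matrix.cons_val]
    norm_num (config := { decide := true })
      [Γf, pd_const', pd_cx1, pd_neg_cx1, pd_quad, Pi.single_apply, Matrix.cons_val_two, Matrix.cons_val_three]
    try field_simp
    try ring

/-- Closed form of the curvature operator. -/
def RM (a b : ℝ) (x : Pt) (l i j k : Fin 4) : ℝ :=
  (if i = 0 ∧ j = 1 then (1:ℝ) else if i = 1 ∧ j = 0 then -1 else 0) *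
  (if l = 2 then 3*b/a * (2*(x 1) * (if k = 0 then 1 else 0) + (if k = 1 then 1 else 0))
   else if l = 3 then -(3*b/a) * (if k = 0 then 1 else 0) else 0)

set_option maxHeartbeats 16000000 in
lemma Rup_eq (a b : ℝ) (h : a ≠ 0) (x : Pt) (l i j k : Fin 4) :
    Rup (gB1 a b 0 0) x l i j k = RM a b x l i j k := by
  fin_cases l <;> fin_cases i <;> fin_cases j <;> fin_cases k <;>
  · simp only [Rup, Fin.sum_univ_four, chris_eq a b h]
    norm_num (config := { decide := true })
      [Γf, RM, pd_const', pd_cx1, pd_neg_cx1, pd_quad, Pi.single_apply]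
    try field_simp
    try ring

lemma ricci_zero (a b : ℝ) (h : a ≠ 0) (x : Pt) (i j : Fin 4) :
    ricci (gB1 a b 0 0) x i j = 0 := by
  fin_cases i <;> fin_cases j <;>
  · simp only [ricci, Fin.sum_univ_four, Rup_eq a b h]
    norm_num (config := { decide := true }) [RM]

lemma scal_zero (a b : ℝ) (h : a ≠ 0) (x : Pt) : scal (gB1 a b 0 0) x = 0 := by
  simp [scal, ricci_zero a b h]

set_option maxHeartbeats 16000000 in
lemma Riem_eq (a b : ℝ) (h : a ≠ 0) (x : Pt) (i j k l : Fin 4) :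
    Riem (gB1 a b 0 0) x i j k l =
      (-3*b) * ((if i = 0 ∧ j = 1 then (1:ℝ) else if i = 1 ∧ j = 0 then -1 else 0)
        * (if k = 0 ∧ l = 1 then (1:ℝ) else if k = 1 ∧ l = 0 then -1 else 0)) := by
  fin_cases i <;> fin_cases j <;> fin_cases k <;> fin_cases l <;>
  · simp only [Riem, Fin.sum_univ_four, Rup_eq a b h, gB1, Matrix.of_apply, Matrix.cons_val]
    norm_num (config := { decide := true }) [RM, gB1, Matrix.cons_val_two, Matrix.cons_val_three]
    try field_simp
    try ring

lemma weyl_eq (a b : ℝ) (h : a ≠ 0) (x : Pt) (i j k l : Fin 4) :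
    weyl (gB1 a b 0 0) x i j k l =
      (-3*b) * ((if i = 0 ∧ j = 1 then (1:ℝ) else if i = 1 ∧ j = 0 then -1 else 0)
        * (if k = 0 ∧ l = 1 then (1:ℝ) else if k = 1 ∧ l = 0 then -1 else 0)) := by
  simp [weyl, ricci_zero a b h, scal_zero a b h, Riem_eq a b h]

lemma jrow0 (a b : ℝ) (h : a ≠ 0) (x : Pt) (v : Fin 4 → ℝ) (i : Fin 4) :
    jacobi (gB1 a b 0 0) x v 0 i = 0 := by
  simp (config := { decide := true }) [jacobi, Fin.sum_univ_four, Rup_eq a b h, RM]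

lemma jrow1 (a b : ℝ) (h : a ≠ 0) (x : Pt) (v : Fin 4 → ℝ) (i : Fin 4) :
    jacobi (gB1 a b 0 0) x v 1 i = 0 := by
  simp (config := { decide := true }) [jacobi, Fin.sum_univ_four, Rup_eq a b h, RM]

lemma jcol2 (a b : ℝ) (h : a ≠ 0) (x : Pt) (v : Fin 4 → ℝ) (l : Fin 4) :
    jacobi (gB1 a b 0 0) x v l 2 = 0 := by
  simp (config := { decide := true }) [jacobi, Fin.sum_univ_four, Rup_eq a b h, RM]

lemma jcol3 (a b : ℝ) (h : a ≠ 0) (x : Pt) (v : Fin 4 → ℝ) (l : Fin 4) :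
    jacobi (gB1 a b 0 0) x v l 3 = 0 := by
  simp (config := { decide := true }) [jacobi, Fin.sum_univ_four, Rup_eq a b h, RM]

/-- the Type (B.1) metric with q = c = 0 is Ricci flat,
its only non-zero Weyl component (up to symmetries) is W₁₂₁₂ = −3b,
it is flat iff b = 0, and for b ≠ 0 all Jacobi operators are two-step
nilpotent. -/
theorem typeB1_qc0 (a b : ℝ) (h : a ≠ 0) :
    (∀ (x : Pt) (i j : Fin 4), ricci (gB1 a b 0 0) x i j = 0) ∧
    (∀ (x : Pt) (i j k l : Fin 4), weyl (gB1 a b 0 0) x i j k l =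
      (-3*b) * ((if i = 0 ∧ j = 1 then (1:ℝ) else if i = 1 ∧ j = 0 then -1 else 0)
        * (if k = 0 ∧ l = 1 then (1:ℝ) else if k = 1 ∧ l = 0 then -1 else 0))) ∧
    ((∀ (x : Pt) (i j k l : Fin 4), Riem (gB1 a b 0 0) x i j k l = 0) ↔ b = 0) ∧
    (b ≠ 0 → ∀ (x : Pt) (v : Fin 4 → ℝ),
      jacobi (gB1 a b 0 0) x v * jacobi (gB1 a b 0 0) x v = 0) := by
  refine ⟨fun x i j => ricci_zero a b h x i j, fun x i j k l => weyl_eq a b h x i j k l, ?_, ?_⟩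
  · constructor
    · intro H
      have := H (fun _ => 0) 0 1 0 1
      rw [Riem_eq a b h] at this
      norm_num at this
      linarith
    · intro hb x i j k l
      rw [Riem_eq a b h, hb]
      ring
  · intro _ x v
    ext l i
    rw [Matrix.mul_apply, Fin.sum_univ_four,
      jrow0 a b h, jrow1 a b h, jcol2 a b h, jcol3 a b h]
    simp
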